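/- Let U = CNOT₁₂ · CNOT₂₁ · (K† ⊗ I₂), where K = (1/√2)[[1,1],[i,−i]]. Then conjugation by U maps X⊗X ↦ I⊗Y, Y⊗I ↦ I⊗Z, and Z⊗X ↦ I⊗X. Consequently, for every ρ_L = (1/4)(I⊗I + α X⊗X + β Y⊗I + γ Z⊗X), one has U ρ_L U† = (1/2)I₂ ⊗ (1/2)(I₂ + γX + αY + βZ). -/

import Mathlib

open Matrix Kronecker

noncomputable section

def PX : Matrix (Fin 2) (Fin 2) ℂ := !![0, 1; 1, 0]
def PY : Matrix (Fin 2) (Fin 2) ℂ := !![0, -Complex.I; Complex.I, 0]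
def PZ : Matrix (Fin 2) (Fin 2) ℂ := !![1, 0; 0, -1]

def Kgate : Matrix (Fin 2) (Fin 2) ℂ :=
  ((Real.sqrt 2 : ℂ))⁻¹ • !![1, 1; Complex.I, -Complex.I]

/-- CNOT with control on qubit 1 and target on qubit 2: |a,b⟩ ↦ |a, a+b⟩. -/
def CNOT12 : Matrix (Fin 2 × Fin 2) (Fin 2 × Fin 2) ℂ :=
  fun p q => if p.1 = q.1 ∧ p.2 = q.1 + q.2 then 1 else 0

/-- CNOT with control on qubit 2 and target on qubit 1: |a,b⟩ ↦ |a+b, b⟩. -/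
def CNOT21 : Matrix (Fin 2 × Fin 2) (Fin 2 × Fin 2) ℂ :=
  fun p q => if p.2 = q.2 ∧ p.1 = q.2 + q.1 then 1 else 0

def Urot : Matrix (Fin 2 × Fin 2) (Fin 2 × Fin 2) ℂ :=
  CNOT12 * CNOT21 * (Kgateᴴ ⊗ₖ (1 : Matrix (Fin 2) (Fin 2) ℂ))

/-- The integer part of `Urot`: `Urot = (√2)⁻¹ • Mmat`. -/
def fM : Fin 2 → Fin 2 → Fin 2 → Fin 2 → ℂ :=
  ![![![![1,0],![-Complex.I,0]],
     ![![0,1],![0,Complex.I]]],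
    ![![![0,1],![0,-Complex.I]],
     ![![1,0],![Complex.I,0]]]]

def Mmat : Matrix (Fin 2 × Fin 2) (Fin 2 × Fin 2) ℂ :=
  Matrix.of fun p q => fM p.1 p.2 q.1 q.2

lemma Urot_eq : Urot = ((Real.sqrt 2 : ℂ))⁻¹ • Mmat := by
  ext ⟨a,b⟩ ⟨c,d⟩
  fin_cases a <;> fin_cases b <;> fin_cases c <;> fin_cases d <;>
    simp [Urot, CNOT12, CNOT21, Kgate, Mmat, fM, Matrix.mul_apply,
      Matrix.kroneckerMap_apply, Fintype.sum_prod_type, Fin.sum_univ_two,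
      Matrix.conjTranspose_apply, Matrix.one_apply]

lemma hXX : Mmat * (PX ⊗ₖ PX) * Mmatᴴ
    = (2:ℂ) • ((1 : Matrix (Fin 2) (Fin 2) ℂ) ⊗ₖ PY) := by
  ext ⟨a,b⟩ ⟨c,d⟩
  fin_cases a <;> fin_cases b <;> fin_cases c <;> fin_cases d <;>
    simp [Mmat, fM, PX, PY, Matrix.mul_apply, Matrix.kroneckerMap_apply,
      Fintype.sum_prod_type, Fin.sum_univ_two, Matrix.conjTranspose_apply,
      Matrix.one_apply] <;> ring_nf

lemma hYI : Mmat * (PY ⊗ₖ (1 : Matrix (Fin 2) (Fin 2) ℂ)) * Mmatᴴ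
    = (2:ℂ) • ((1 : Matrix (Fin 2) (Fin 2) ℂ) ⊗ₖ PZ) := by
  ext ⟨a,b⟩ ⟨c,d⟩
  fin_cases a <;> fin_cases b <;> fin_cases c <;> fin_cases d <;>
    simp [Mmat, fM, PY, PZ, Matrix.mul_apply, Matrix.kroneckerMap_apply,
      Fintype.sum_prod_type, Fin.sum_univ_two, Matrix.conjTranspose_apply,
      Matrix.one_apply] <;> ring_nf

lemma hZX : Mmat * (PZ ⊗ₖ PX) * Mmatᴴ
    = (2:ℂ) • ((1 : Matrix (Fin 2) (Fin 2) ℂ) ⊗ₖ PX) := by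
  ext ⟨a,b⟩ ⟨c,d⟩
  fin_cases a <;> fin_cases b <;> fin_cases c <;> fin_cases d <;>
    simp [Mmat, fM, PZ, PX, Matrix.mul_apply, Matrix.kroneckerMap_apply,
      Fintype.sum_prod_type, Fin.sum_univ_two, Matrix.conjTranspose_apply,
      Matrix.one_apply] <;> ring_nf

lemma hII : Mmat * ((1 : Matrix (Fin 2) (Fin 2) ℂ) ⊗ₖ (1 : Matrix (Fin 2) (Fin 2) ℂ)) * Mmatᴴ
    = (2:ℂ) • ((1 : Matrix (Fin 2) (Fin 2) ℂ) ⊗ₖ (1 : Matrix (Fin 2) (Fin 2) ℂ)) := by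
  ext ⟨a,b⟩ ⟨c,d⟩
  fin_cases a <;> fin_cases b <;> fin_cases c <;> fin_cases d <;>
    simp [Mmat, fM, Matrix.mul_apply, Matrix.kroneckerMap_apply,
      Fintype.sum_prod_type, Fin.sum_univ_two, Matrix.conjTranspose_apply,
      Matrix.one_apply, Prod.ext_iff] <;> ring_nf

lemma conj_of (A B : Matrix (Fin 2 × Fin 2) (Fin 2 × Fin 2) ℂ)
    (h : Mmat * A * Mmatᴴ = (2:ℂ) • B) : Urot * A * Urotᴴ = B := by
  have h2 : ((Real.sqrt 2 : ℝ) : ℂ) * ((Real.sqrt 2 : ℝ) : ℂ) = 2 := by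
    rw [← Complex.ofReal_mul, Real.mul_self_sqrt (by norm_num : (0:ℝ) ≤ 2)]
    norm_num
  have hs : ((Real.sqrt 2 : ℂ))⁻¹ * ((Real.sqrt 2 : ℂ))⁻¹ = (2:ℂ)⁻¹ := by
    rw [← mul_inv, h2]
  have hst : star ((Real.sqrt 2 : ℂ))⁻¹ = ((Real.sqrt 2 : ℂ))⁻¹ := by
    rw [star_inv₀]
    congr 1
    exact Complex.conj_ofReal _
  rw [Urot_eq, Matrix.conjTranspose_smul, hst, Matrix.smul_mul, Matrix.mul_smul,
    Matrix.smul_mul, smul_smul, hs, h, smul_smul]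
  norm_num

/-- Conjugation by U = CNOT₁₂·CNOT₂₁·(K†⊗I) maps XX ↦ IY, YI ↦ IZ, ZX ↦ IX,
hence sends ρ_L = (1/4)(II + αXX + βYI + γZX) to (1/2)I ⊗ (1/2)(I + γX + αY + βZ). -/
theorem conjugation_maps_logical_algebra :
    (Urot * (PX ⊗ₖ PX) * Urotᴴ = (1 : Matrix (Fin 2) (Fin 2) ℂ) ⊗ₖ PY) ∧
    (Urot * (PY ⊗ₖ (1 : Matrix (Fin 2) (Fin 2) ℂ)) * Urotᴴ = (1 : Matrix (Fin 2) (Fin 2) ℂ) ⊗ₖ PZ) ∧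
    (Urot * (PZ ⊗ₖ PX) * Urotᴴ = (1 : Matrix (Fin 2) (Fin 2) ℂ) ⊗ₖ PX) ∧
    ∀ α β γ : ℝ,
      Urot * ((1/4 : ℂ) • ((1 : Matrix (Fin 2) (Fin 2) ℂ) ⊗ₖ 1
          + (α : ℂ) • (PX ⊗ₖ PX) + (β : ℂ) • (PY ⊗ₖ 1) + (γ : ℂ) • (PZ ⊗ₖ PX))) * Urotᴴ
      = ((1/2 : ℂ) • (1 : Matrix (Fin 2) (Fin 2) ℂ)) ⊗ₖ
          ((1/2 : ℂ) • ((1 : Matrix (Fin 2) (Fin 2) ℂ)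
            + (γ : ℂ) • PX + (α : ℂ) • PY + (β : ℂ) • PZ)) := by
  have h1 := conj_of _ _ hXX
  have h2 := conj_of _ _ hYI
  have h3 := conj_of _ _ hZX
  have h0 := conj_of _ _ hII
  refine ⟨h1, h2, h3, fun α β γ => ?_⟩
  have expand : Urot * ((1/4 : ℂ) • ((1 : Matrix (Fin 2) (Fin 2) ℂ) ⊗ₖ 1
          + (α : ℂ) • (PX ⊗ₖ PX) + (β : ℂ) • (PY ⊗ₖ 1) + (γ : ℂ) • (PZ ⊗ₖ PX))) * Urotᴴ
      = (1/4 : ℂ) • (Urot * ((1 : Matrix (Fin 2) (Fin 2) ℂ) ⊗ₖ 1) * Urotᴴ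
          + (α : ℂ) • (Urot * (PX ⊗ₖ PX) * Urotᴴ)
          + (β : ℂ) • (Urot * (PY ⊗ₖ 1) * Urotᴴ)
          + (γ : ℂ) • (Urot * (PZ ⊗ₖ PX) * Urotᴴ)) := by
    simp only [Matrix.mul_smul, Matrix.smul_mul, Matrix.mul_add, Matrix.add_mul]
  rw [expand, h0, h1, h2, h3]
  ext ⟨a,b⟩ ⟨c,d⟩
  fin_cases a <;> fin_cases b <;> fin_cases c <;> fin_cases d <;>
    simp [PX, PY, PZ, Matrix.kroneckerMap_apply, Matrix.one_apply, Prod.ext_iff] <;> ring
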